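/- The logic B enjoys interpolation: if φ ⊢_B ψ then there is a formula χ such that every atom occurring in χ occurs in both φ and ψ, φ ⊢_B χ, and χ ⊢_B ψ. The logic K enjoys (K, B)-interpolation: if φ ⊢_K ψ then there is such a χ with φ ⊢_K χ and χ ⊢_B ψ. The logic ETL enjoys (ETL, B)-interpolation: if φ ⊢_ETL ψ then there is such a χ with φ ⊢_ETL χ and χ ⊢_B ψ. -/

import Mathlib

/-- Propositional formulas: atoms, conjunction, disjunction, De Morgan negation, ⊤, ⊥. -/
inductive Fm : Type where
  | atom : ℕ → Fm
  | conj : Fm → Fm → Fm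
  | disj : Fm → Fm → Fm
  | neg  : Fm → Fm
  | top  : Fm
  | bot  : Fm
deriving DecidableEq

/-- The atom `i` occurs in a formula. -/
def occurs (i : ℕ) : Fm → Prop
  | .atom j => i = j
  | .conj φ ψ => occurs i φ ∨ occurs i ψ
  | .disj φ ψ => occurs i φ ∨ occurs i ψ
  | .neg φ => occurs i φ
  | .top => False
  | .bot => False

/-- The four elements of the De Morgan algebra B4. -/
inductive B4 : Type where
  | f | n | b | t
deriving DecidableEq

/-- Meet in the truth order of B4 (bottom `f`, top `t`, `n` and `b` incomparable). -/
def bmeet : B4 → B4 → B4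
  | .f, _ => .f
  | _, .f => .f
  | .t, x => x
  | x, .t => x
  | .n, .n => .n
  | .b, .b => .b
  | .n, .b => .f
  | .b, .n => .f

/-- Join in the truth order of B4. -/
def bjoin : B4 → B4 → B4
  | .t, _ => .t
  | _, .t => .t
  | .f, x => x
  | x, .f => x
  | .n, .n => .n
  | .b, .b => .b
  | .n, .b => .t
  | .b, .n => .t

/-- De Morgan negation on B4: swaps `f` and `t`, fixes `n` and `b`. -/
def bneg : B4 → B4
  | .f => .t
  | .t => .f
  | .n => .n
  | .b => .b

/-- The information order ⊑ on B4: bottom `n`, top `b`, `f` and `t` incomparable. -/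
def infoLe (x y : B4) : Prop := x = y ∨ x = B4.n ∨ y = B4.b

/-- Evaluation of a formula in B4 under an atom assignment (the unique homomorphic
extension of the valuation of atoms). -/
def evalv (v : ℕ → B4) : Fm → B4
  | .atom j => v j
  | .conj φ ψ => bmeet (evalv v φ) (evalv v ψ)
  | .disj φ ψ => bjoin (evalv v φ) (evalv v ψ)
  | .neg φ => bneg (evalv v φ)
  | .top => .t
  | .bot => .f

/-- Designated values of the matrices B4 and LP3: `t` and `b`. -/
def desB (x : B4) : Prop := x = B4.t ∨ x = B4.b

/-- Consequence over the matrix B4 (designated values {t, b}): the Dunn–Belnap logic B. -/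
def Bcon (Γ : Set Fm) (φ : Fm) : Prop :=
  ∀ v : ℕ → B4, (∀ γ ∈ Γ, desB (evalv v γ)) → desB (evalv v φ)

/-- Consequence over the submatrix LP3 on {f, b, t} (designated {t, b}): the Logic of Paradox. -/
def LPcon (Γ : Set Fm) (φ : Fm) : Prop :=
  ∀ v : ℕ → B4, (∀ j, v j ≠ B4.n) → (∀ γ ∈ Γ, desB (evalv v γ)) → desB (evalv v φ)

/-- Consequence over the submatrix K3 on {f, n, t} (designated {t}): strong Kleene logic. -/
def Kcon (Γ : Set Fm) (φ : Fm) : Prop :=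
  ∀ v : ℕ → B4, (∀ j, v j ≠ B4.b) → (∀ γ ∈ Γ, evalv v γ = B4.t) → evalv v φ = B4.t

/-- Consequence over the matrix ETL4 (the algebra B4 with designated set {t}): Exactly True Logic. -/
def ETLcon (Γ : Set Fm) (φ : Fm) : Prop :=
  ∀ v : ℕ → B4, (∀ γ ∈ Γ, evalv v γ = B4.t) → evalv v φ = B4.t

/-- Consequence over the Boolean submatrix on {f, t} (designated {t}): classical logic CL. -/
def CLcon (Γ : Set Fm) (φ : Fm) : Prop :=
  ∀ v : ℕ → B4, (∀ j, v j = B4.f ∨ v j = B4.t) →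
    (∀ γ ∈ Γ, evalv v γ = B4.t) → evalv v φ = B4.t

section Interp

instance : Fintype B4 :=
  ⟨⟨{B4.f, B4.n, B4.b, B4.t}, by decide⟩, by intro x; cases x <;> decide⟩

instance (x y : B4) : Decidable (infoLe x y) := by unfold infoLe; infer_instance
instance (x : B4) : Decidable (desB x) := by unfold desB; infer_instance

lemma infoLe_refl (x : B4) : infoLe x x := Or.inl rfl

lemma bmeet_mono : ∀ x y x' y' : B4, infoLe x y → infoLe x' y' →
    infoLe (bmeet x x') (bmeet y y') := by decide

lemma bjoin_mono : ∀ x y x' y' : B4, infoLe x y → infoLe x' y' →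
    infoLe (bjoin x x') (bjoin y y') := by decide

lemma bneg_mono : ∀ x y : B4, infoLe x y → infoLe (bneg x) (bneg y) := by decide

lemma desB_mono : ∀ x y : B4, infoLe x y → desB x → desB y := by decide

lemma t_infoLe_desB : ∀ y : B4, infoLe B4.t y → desB y := by decide

/-- Evaluation is monotone in the information order. -/
lemma eval_mono (φ : Fm) (v w : ℕ → B4) (h : ∀ i, occurs i φ → infoLe (v i) (w i)) :
    infoLe (evalv v φ) (evalv w φ) := by
  induction φ with
  | atom j => exact h j rfl
  | conj a b iha ihb =>
      exact bmeet_mono _ _ _ _ (iha fun i hi => h i (Or.inl hi)) (ihb fun i hi => h i (Or.inr hi))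
  | disj a b iha ihb =>
      exact bjoin_mono _ _ _ _ (iha fun i hi => h i (Or.inl hi)) (ihb fun i hi => h i (Or.inr hi))
  | neg a iha => exact bneg_mono _ _ (iha fun i hi => h i hi)
  | top => exact infoLe_refl _
  | bot => exact infoLe_refl _

lemma eval_agree (φ : Fm) (v w : ℕ → B4) (h : ∀ i, occurs i φ → v i = w i) :
    evalv v φ = evalv w φ := by
  induction φ with
  | atom j => exact h j rfl
  | conj a b iha ihb =>
      simp only [evalv]
      rw [iha fun i hi => h i (Or.inl hi), ihb fun i hi => h i (Or.inr hi)]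
  | disj a b iha ihb =>
      simp only [evalv]
      rw [iha fun i hi => h i (Or.inl hi), ihb fun i hi => h i (Or.inr hi)]
  | neg a iha => simp only [evalv]; rw [iha fun i hi => h i hi]
  | top => rfl
  | bot => rfl

/-- The list of atoms occurring in a formula. -/
def atomList : Fm → List ℕ
  | .atom j => [j]
  | .conj a b => atomList a ++ atomList b
  | .disj a b => atomList a ++ atomList b
  | .neg a => atomList a
  | .top => []
  | .bot => []

lemma occurs_iff_mem (i : ℕ) (φ : Fm) : occurs i φ ↔ i ∈ atomList φ := by
  induction φ with
  | atom j => simp [occurs, atomList]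
  | conj a b iha ihb => simp [occurs, atomList, iha, ihb]
  | disj a b iha ihb => simp [occurs, atomList, iha, ihb]
  | neg a iha => simpa [occurs, atomList] using iha
  | top => simp [occurs, atomList]
  | bot => simp [occurs, atomList]

/-- Conflation: the De Morgan-algebra automorphism swapping `n` and `b`. -/
def conf : B4 → B4
  | .f => .f
  | .t => .t
  | .n => .b
  | .b => .n

lemma conf_bmeet : ∀ x y, conf (bmeet x y) = bmeet (conf x) (conf y) := by decide
lemma conf_bjoin : ∀ x y, conf (bjoin x y) = bjoin (conf x) (conf y) := by decide
lemma conf_bneg : ∀ x, conf (bneg x) = bneg (conf x) := by decide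

lemma eval_conf (φ : Fm) (v : ℕ → B4) :
    evalv (fun p => conf (v p)) φ = conf (evalv v φ) := by
  induction φ with
  | atom j => rfl
  | conj a b iha ihb => simp only [evalv, iha, ihb, conf_bmeet]
  | disj a b iha ihb => simp only [evalv, iha, ihb, conf_bjoin]
  | neg a iha => simp only [evalv, iha, conf_bneg]
  | top => rfl
  | bot => rfl

/-- The truth function of the one-atom characteristic formula. -/
def gval : B4 → B4 → B4
  | .n, _ => .t
  | .t, x => x
  | .f, x => bneg x
  | .b, x => bmeet x (bneg x)

/-- Characteristic formula of value `a` at atom `p`. -/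
def gfm : B4 → ℕ → Fm
  | .n, _ => .top
  | .t, p => .atom p
  | .f, p => .neg (.atom p)
  | .b, p => .conj (.atom p) (.neg (.atom p))

lemma gfm_eval (a : B4) (p : ℕ) (w : ℕ → B4) : evalv w (gfm a p) = gval a (w p) := by
  cases a <;> rfl

lemma gfm_occurs (a : B4) (p i : ℕ) (h : occurs i (gfm a p)) : i = p := by
  cases a <;> simp [gfm, occurs] at h <;> tauto

lemma gval_desB : ∀ a x : B4, desB (gval a x) ↔ infoLe a x := by decide
lemma gval_diag_t : ∀ a : B4, a ≠ B4.b → gval a a = B4.t := by decide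
lemma gval_diag_desB : ∀ a : B4, desB (gval a a) := by decide
lemma gval_conf_diag : ∀ a : B4, gval (conf a) a ≠ B4.b ∧ gval (conf a) a ≠ B4.f := by decide

/-- Big conjunction. -/
def conjList : List Fm → Fm := List.foldr Fm.conj Fm.top

/-- Big disjunction. -/
def disjList : List Fm → Fm := List.foldr Fm.disj Fm.bot

lemma desB_bmeet : ∀ x y : B4, desB (bmeet x y) ↔ desB x ∧ desB y := by decide
lemma bmeet_eq_t : ∀ x y : B4, bmeet x y = B4.t ↔ x = B4.t ∧ y = B4.t := by decide

lemma conjList_desB (v : ℕ → B4) (L : List Fm) :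
    desB (evalv v (conjList L)) ↔ ∀ x ∈ L, desB (evalv v x) := by
  induction L with
  | nil => simp [conjList, evalv, desB]
  | cons h tl ih =>
      show desB (evalv v (Fm.conj h (conjList tl))) ↔ _
      simp [evalv, desB_bmeet, ih, List.forall_mem_cons]

lemma conjList_t (v : ℕ → B4) (L : List Fm) :
    evalv v (conjList L) = B4.t ↔ ∀ x ∈ L, evalv v x = B4.t := by
  induction L with
  | nil => simp [conjList, evalv]
  | cons h tl ih =>
      show evalv v (Fm.conj h (conjList tl)) = B4.t ↔ _
      simp [evalv, bmeet_eq_t, ih, List.forall_mem_cons]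

lemma bmeet_nb : ∀ x y : B4, x ≠ B4.b → x ≠ B4.f → y ≠ B4.b → y ≠ B4.f →
    bmeet x y ≠ B4.b ∧ bmeet x y ≠ B4.f := by decide

lemma conjList_nb (v : ℕ → B4) (L : List Fm)
    (h : ∀ x ∈ L, evalv v x ≠ B4.b ∧ evalv v x ≠ B4.f) :
    evalv v (conjList L) ≠ B4.b ∧ evalv v (conjList L) ≠ B4.f := by
  induction L with
  | nil => exact ⟨by simp [conjList, evalv], by simp [conjList, evalv]⟩
  | cons hd tl ih =>
      have h1 := h hd (List.mem_cons_self)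
      have h2 := ih fun x hx => h x (List.mem_cons_of_mem _ hx)
      show bmeet (evalv v hd) (evalv v (conjList tl)) ≠ B4.b ∧ _
      exact bmeet_nb _ _ h1.1 h1.2 h2.1 h2.2

lemma conjList_occurs (i : ℕ) (L : List Fm) (h : occurs i (conjList L)) :
    ∃ x ∈ L, occurs i x := by
  induction L with
  | nil => exact absurd h (by simp [conjList, occurs])
  | cons hd tl ih =>
      rcases h with h | h
      · exact ⟨hd, List.mem_cons_self, h⟩
      · obtain ⟨x, hx, hox⟩ := ih h
        exact ⟨x, List.mem_cons_of_mem _ hx, hox⟩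

lemma disjList_occurs (i : ℕ) (L : List Fm) (h : occurs i (disjList L)) :
    ∃ x ∈ L, occurs i x := by
  induction L with
  | nil => exact absurd h (by simp [disjList, occurs])
  | cons hd tl ih =>
      rcases h with h | h
      · exact ⟨hd, List.mem_cons_self, h⟩
      · obtain ⟨x, hx, hox⟩ := ih h
        exact ⟨x, List.mem_cons_of_mem _ hx, hox⟩

lemma bjoin_absorb : ∀ x y : B4, bjoin x (bjoin x y) = bjoin x y := by decide
lemma bjoin_left_comm : ∀ x y z : B4, bjoin x (bjoin y z) = bjoin y (bjoin x z) := by decide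
lemma bjoin_assoc : ∀ x y z : B4, bjoin (bjoin x y) z = bjoin x (bjoin y z) := by decide
lemma bjoin_t : ∀ x : B4, bjoin B4.t x = B4.t := by decide
lemma desB_bjoin_left : ∀ x y : B4, desB x → desB (bjoin x y) := by decide
lemma desB_bjoin_cases : ∀ x y : B4, desB (bjoin x y) → desB x ∨ desB y := by decide

lemma disjList_absorb (v : ℕ → B4) (L : List Fm) (x : Fm) (hx : x ∈ L) :
    bjoin (evalv v x) (evalv v (disjList L)) = evalv v (disjList L) := by
  induction L with
  | nil => cases hx
  | cons hd tl ih =>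
      have : evalv v (disjList (hd :: tl)) = bjoin (evalv v hd) (evalv v (disjList tl)) := rfl
      rw [this]
      rcases List.mem_cons.mp hx with rfl | hx'
      · exact bjoin_absorb _ _
      · rw [bjoin_left_comm, ih hx']

lemma disjList_mem_t (v : ℕ → B4) (L : List Fm) (x : Fm) (hx : x ∈ L)
    (ht : evalv v x = B4.t) : evalv v (disjList L) = B4.t := by
  have := disjList_absorb v L x hx
  rw [ht, bjoin_t] at this
  exact this.symm

lemma disjList_mem_desB (v : ℕ → B4) (L : List Fm) (x : Fm) (hx : x ∈ L)
    (ht : desB (evalv v x)) : desB (evalv v (disjList L)) := by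
  rw [← disjList_absorb v L x hx]
  exact desB_bjoin_left _ _ ht

lemma disjList_two_t (v : ℕ → B4) (L : List Fm) (x y : Fm) (hx : x ∈ L) (hy : y ∈ L)
    (ht : bjoin (evalv v x) (evalv v y) = B4.t) : evalv v (disjList L) = B4.t := by
  have h1 := disjList_absorb v L x hx
  have h2 := disjList_absorb v L y hy
  calc evalv v (disjList L) = bjoin (evalv v x) (bjoin (evalv v y) (evalv v (disjList L))) := by
        rw [h2, h1]
    _ = bjoin (bjoin (evalv v x) (evalv v y)) (evalv v (disjList L)) := (bjoin_assoc _ _ _).symm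
    _ = B4.t := by rw [ht, bjoin_t]

lemma disjList_desB_exists (v : ℕ → B4) (L : List Fm) (h : desB (evalv v (disjList L))) :
    ∃ x ∈ L, desB (evalv v x) := by
  induction L with
  | nil => exact absurd h (by simp [disjList, evalv, desB])
  | cons hd tl ih =>
      have : evalv v (disjList (hd :: tl)) = bjoin (evalv v hd) (evalv v (disjList tl)) := rfl
      rw [this] at h
      rcases desB_bjoin_cases _ _ h with h' | h'
      · exact ⟨hd, List.mem_cons_self, h'⟩
      · obtain ⟨x, hx, hox⟩ := ih h'
        exact ⟨x, List.mem_cons_of_mem _ hx, hox⟩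

/-- All valuations on a finite list of atoms (arbitrary default `n` elsewhere). -/
def allFuns : List ℕ → List (ℕ → B4)
  | [] => [fun _ => B4.n]
  | p :: ps => (allFuns ps).flatMap fun u =>
      [B4.f, B4.n, B4.b, B4.t].map fun a => fun q => if q = p then a else u q

lemma exists_allFuns (S : List ℕ) (w : ℕ → B4) :
    ∃ u ∈ allFuns S, (∀ p ∈ S, u p = w p) ∧ (∀ p, p ∉ S → u p = B4.n) := by
  induction S with
  | nil => exact ⟨fun _ => B4.n, by simp [allFuns], by simp, fun _ _ => rfl⟩
  | cons q qs ih =>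
      obtain ⟨u, hu, hagr, hout⟩ := ih
      refine ⟨fun r => if r = q then w q else u r, ?_, ?_, ?_⟩
      · simp only [allFuns, List.mem_flatMap, List.mem_map]
        exact ⟨u, hu, w q, by cases h : w q <;> simp, rfl⟩
      · intro p hp
        by_cases hpq : p = q
        · subst hpq; simp
        · simp only [if_neg hpq]
          exact hagr p (by rcases List.mem_cons.mp hp with h | h; exact absurd h hpq; exact h)
      · intro p hp
        have hpq : p ≠ q := fun h => hp (h ▸ List.mem_cons_self)
        simp only [if_neg hpq]
        exact hout p fun h => hp (List.mem_cons_of_mem _ h)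

/-- The shared atoms of two formulas. -/
def sharedAtoms (φ ψ : Fm) : List ℕ :=
  (atomList φ).filter fun i => decide (i ∈ atomList ψ)

lemma mem_sharedAtoms (i : ℕ) (φ ψ : Fm) :
    i ∈ sharedAtoms φ ψ ↔ occurs i φ ∧ occurs i ψ := by
  simp [sharedAtoms, List.mem_filter, occurs_iff_mem]

/-- The characteristic formula of a valuation on shared atoms. -/
def chiU (S : List ℕ) (u : ℕ → B4) : Fm := conjList (S.map fun p => gfm (u p) p)

open Classical in
/-- The disjuncts of the interpolant determined by a class `P` of valuations. -/
noncomputable def interpList (P : (ℕ → B4) → Prop) (φ ψ : Fm) : List Fm :=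
  (allFuns (sharedAtoms φ ψ)).map fun u =>
    if (∃ w, P w ∧ ∀ p ∈ sharedAtoms φ ψ, w p = u p) then chiU (sharedAtoms φ ψ) u else Fm.bot

/-- The interpolant determined by a class `P` of "premise-designating" valuations. -/
noncomputable def interp (P : (ℕ → B4) → Prop) (φ ψ : Fm) : Fm :=
  disjList (interpList P φ ψ)

lemma interp_occurs (P : (ℕ → B4) → Prop) (φ ψ : Fm) (i : ℕ)
    (h : occurs i (interp P φ ψ)) : occurs i φ ∧ occurs i ψ := by
  obtain ⟨x, hx, hox⟩ := disjList_occurs _ _ h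
  obtain ⟨u, _, rfl⟩ := List.mem_map.mp (by simpa [interpList] using hx)
  rw [← mem_sharedAtoms i φ ψ]
  split at hox
  · obtain ⟨y, hy, hoy⟩ := conjList_occurs _ _ hox
    obtain ⟨p, hp, rfl⟩ := List.mem_map.mp hy
    exact (gfm_occurs _ _ _ hoy) ▸ hp
  · exact absurd hox (by simp [occurs])

lemma interp_mem (P : (ℕ → B4) → Prop) (φ ψ : Fm) (u : ℕ → B4)
    (hu : u ∈ allFuns (sharedAtoms φ ψ))
    (hP : ∃ w, P w ∧ ∀ p ∈ sharedAtoms φ ψ, w p = u p) :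
    chiU (sharedAtoms φ ψ) u ∈ interpList P φ ψ := by
  classical
  unfold interpList
  refine List.mem_map.mpr ⟨u, hu, ?_⟩
  rw [if_pos hP]

/-- The left-to-right half: any valuation designating the interpolant can be traded
for a premise-designating valuation below the original one on the atoms of `ψ`. -/
lemma interp_right (P : (ℕ → B4) → Prop) (φ ψ : Fm) (w : ℕ → B4)
    (hw : desB (evalv w (interp P φ ψ))) :
    ∃ w' v : ℕ → B4, P w' ∧ evalv v φ = evalv w' φ ∧
      (∀ i, occurs i ψ → infoLe (v i) (w i)) ∧
      ((∀ j, w' j ≠ B4.b) → ∀ j, v j ≠ B4.b) := by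
  classical
  obtain ⟨x, hx, hdx⟩ := disjList_desB_exists _ _ hw
  obtain ⟨u, hu, rfl⟩ := List.mem_map.mp (by simpa [interpList] using hx)
  by_cases hP : ∃ w0, P w0 ∧ ∀ p ∈ sharedAtoms φ ψ, w0 p = u p
  · rw [if_pos hP] at hdx
    obtain ⟨w', hPw', hw'u⟩ := hP
    -- from designation of chiU: infoLe (u p) (w p) for p shared
    have hinfo : ∀ p ∈ sharedAtoms φ ψ, infoLe (u p) (w p) := by
      intro p hp
      have := (conjList_desB w _).mp hdx (gfm (u p) p) (List.mem_map.mpr ⟨p, hp, rfl⟩)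
      rw [gfm_eval] at this
      exact (gval_desB _ _).mp this
    refine ⟨w', fun q => if occurs q φ then w' q else (if w q = B4.b then B4.n else w q),
      hPw', ?_, ?_, ?_⟩
    · exact eval_agree _ _ _ fun i hi => by simp [hi]
    · intro i hi
      by_cases hiφ : occurs i φ
      · simp only [if_pos hiφ]
        have hs : i ∈ sharedAtoms φ ψ := (mem_sharedAtoms i φ ψ).mpr ⟨hiφ, hi⟩
        rw [hw'u i hs]
        exact hinfo i hs
      · simp only [if_neg hiφ]
        split
        · exact Or.inr (Or.inr (by assumption))
        · exact infoLe_refl _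
    · intro hnb j
      by_cases hjφ : occurs j φ
      · simpa [hjφ] using hnb j
      · simp only [if_neg hjφ]
        split
        · simp
        · assumption
  · rw [if_neg hP] at hdx
    exact absurd hdx (by simp [evalv, desB])

end Interp

lemma bjoin_des_nb : ∀ x y : B4, desB x → y ≠ B4.b → y ≠ B4.f → bjoin x y = B4.t := by decide

lemma chiU_desB_diag (φ ψ : Fm) (w u : ℕ → B4)
    (hagr : ∀ p ∈ sharedAtoms φ ψ, u p = w p) :
    desB (evalv w (chiU (sharedAtoms φ ψ) u)) := by
  refine (conjList_desB _ _).mpr ?_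
  intro x hx
  obtain ⟨p, hp, rfl⟩ := List.mem_map.mp hx
  rw [gfm_eval, hagr p hp]
  exact gval_diag_desB _

/-- B enjoys interpolation, K enjoys (K, B)-interpolation, and ETL enjoys
(ETL, B)-interpolation. -/
theorem stmt16 :
    (∀ φ ψ : Fm, Bcon {φ} ψ →
      ∃ χ : Fm, (∀ i, occurs i χ → occurs i φ ∧ occurs i ψ) ∧
        Bcon {φ} χ ∧ Bcon {χ} ψ) ∧
    (∀ φ ψ : Fm, Kcon {φ} ψ →
      ∃ χ : Fm, (∀ i, occurs i χ → occurs i φ ∧ occurs i ψ) ∧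
        Kcon {φ} χ ∧ Bcon {χ} ψ) ∧
    (∀ φ ψ : Fm, ETLcon {φ} ψ →
      ∃ χ : Fm, (∀ i, occurs i χ → occurs i φ ∧ occurs i ψ) ∧
        ETLcon {φ} χ ∧ Bcon {χ} ψ) := by
  refine ⟨?_, ?_, ?_⟩
  · -- Belnap logic B
    intro φ ψ hBψ
    set P : (ℕ → B4) → Prop := fun w => desB (evalv w φ) with hPdef
    refine ⟨interp P φ ψ, interp_occurs P φ ψ, ?_, ?_⟩
    · intro w hw
      have hφ : desB (evalv w φ) := hw φ rfl
      obtain ⟨u, hu, hagr, -⟩ := exists_allFuns (sharedAtoms φ ψ) w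
      have hmem := interp_mem P φ ψ u hu ⟨w, hφ, fun p hp => (hagr p hp).symm⟩
      exact disjList_mem_desB w _ _ hmem (chiU_desB_diag φ ψ w u hagr)
    · intro w hw
      obtain ⟨w', v, hPw', hveq, hvle, -⟩ := interp_right P φ ψ w (hw _ rfl)
      have hφv : desB (evalv v φ) := hveq ▸ hPw'
      have hψv : desB (evalv v ψ) := hBψ v (fun γ hγ => hγ ▸ hφv)
      exact desB_mono _ _ (eval_mono ψ v w hvle) hψv
  · -- strong Kleene logic K
    intro φ ψ hKψ
    set P : (ℕ → B4) → Prop := fun w => (∀ j, w j ≠ B4.b) ∧ evalv w φ = B4.t with hPdef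
    refine ⟨interp P φ ψ, interp_occurs P φ ψ, ?_, ?_⟩
    · intro w hwb hw
      have hφ : evalv w φ = B4.t := hw φ rfl
      obtain ⟨u, hu, hagr, -⟩ := exists_allFuns (sharedAtoms φ ψ) w
      have hmem := interp_mem P φ ψ u hu ⟨w, ⟨hwb, hφ⟩, fun p hp => (hagr p hp).symm⟩
      refine disjList_mem_t w _ _ hmem ?_
      refine (conjList_t _ _).mpr ?_
      intro x hx
      obtain ⟨p, hp, rfl⟩ := List.mem_map.mp hx
      rw [gfm_eval, hagr p hp]
      exact gval_diag_t _ (hwb p)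
    · intro w hw
      obtain ⟨w', v, hPw', hveq, hvle, hvb⟩ := interp_right P φ ψ w (hw _ rfl)
      have hφv : evalv v φ = B4.t := hveq.trans hPw'.2
      have hψv : evalv v ψ = B4.t := hKψ v (hvb hPw'.1) (fun γ hγ => hγ ▸ hφv)
      exact t_infoLe_desB _ (hψv ▸ eval_mono ψ v w hvle)
  · -- Exactly True Logic
    intro φ ψ hEψ
    set P : (ℕ → B4) → Prop := fun w => evalv w φ = B4.t with hPdef
    refine ⟨interp P φ ψ, interp_occurs P φ ψ, ?_, ?_⟩
    · intro w hw
      have hφ : evalv w φ = B4.t := hw φ rfl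
      obtain ⟨u, hu, hagr, -⟩ := exists_allFuns (sharedAtoms φ ψ) w
      obtain ⟨u', hu', hagr', -⟩ := exists_allFuns (sharedAtoms φ ψ) (fun p => conf (w p))
      have hmem := interp_mem P φ ψ u hu ⟨w, hφ, fun p hp => (hagr p hp).symm⟩
      have hφc : evalv (fun p => conf (w p)) φ = B4.t := by
        rw [eval_conf, hφ]; rfl
      have hmem' := interp_mem P φ ψ u' hu'
        ⟨fun p => conf (w p), hφc, fun p hp => (hagr' p hp).symm⟩
      refine disjList_two_t w _ _ _ hmem hmem' ?_
      have hA : desB (evalv w (chiU (sharedAtoms φ ψ) u)) := chiU_desB_diag φ ψ w u hagr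
      have hB : evalv w (chiU (sharedAtoms φ ψ) u') ≠ B4.b ∧
          evalv w (chiU (sharedAtoms φ ψ) u') ≠ B4.f := by
        refine conjList_nb _ _ ?_
        intro x hx
        obtain ⟨p, hp, rfl⟩ := List.mem_map.mp hx
        rw [gfm_eval, hagr' p hp]
        exact gval_conf_diag _
      exact bjoin_des_nb _ _ hA hB.1 hB.2
    · intro w hw
      obtain ⟨w', v, hPw', hveq, hvle, -⟩ := interp_right P φ ψ w (hw _ rfl)
      have hφv : evalv v φ = B4.t := hveq.trans hPw'
      have hψv : evalv v ψ = B4.t := hEψ v (fun γ hγ => hγ ▸ hφv)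
      exact t_infoLe_desB _ (hψv ▸ eval_mono ψ v w hvle)
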